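/- Let Y₁, Y₂ ∈ ℝ^{I×I} with Y₁ nonsingular and suppose A = Y₂Y₁⁻¹ is diagonalizable over ℝ: A = P D P⁻¹ with D diagonal. Then the array Y with slices (Y₁, Y₂) satisfies Y = Σ_{r=1}^I p_r ∘ q_r ∘ z_r, where p_r are the columns of P, q_r are the columns of (P⁻¹Y₁)ᵀ, and z_r = (1, d_r) with d_r the r-th diagonal entry of D. In particular rank∘(Y) ≤ I. -/

import Mathlib

open Matrix

theorem stmt19 (I : ℕ) (Y₁ Y₂ : Matrix (Fin I) (Fin I) ℝ)
    (hY₁ : IsUnit Y₁.det)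
    (P D : Matrix (Fin I) (Fin I) ℝ) (hP : IsUnit P.det) (hD : D.IsDiag)
    (hA : Y₂ * Y₁⁻¹ = P * D * P⁻¹) :
    Y₁ = ∑ r : Fin I, vecMulVec (fun i => P i r) (fun j => (P⁻¹ * Y₁) r j) ∧
    Y₂ = ∑ r : Fin I, D r r •
      vecMulVec (fun i => P i r) (fun j => (P⁻¹ * Y₁) r j) := by
  have hPD : ∀ i x, (P * D) i x = D x x * P i x := by
    intro i x
    rw [mul_apply]
    rw [Finset.sum_eq_single x]
    · ring
    · intro b _ hb
      simp [hD hb]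
    · simp
  have h1 : (∑ r : Fin I, vecMulVec (fun i => P i r) (fun j => (P⁻¹ * Y₁) r j))
      = P * (P⁻¹ * Y₁) := by
    ext i j
    simp [Matrix.sum_apply, vecMulVec_apply, mul_apply]
  have hPP : P * P⁻¹ = 1 := mul_nonsing_inv P hP
  constructor
  · rw [h1, ← mul_assoc, hPP, one_mul]
  · have hY2 : Y₂ = P * D * (P⁻¹ * Y₁) := by
      have := congrArg (· * Y₁) hA
      simpa [mul_assoc, nonsing_inv_mul Y₁ hY₁] using this
    rw [hY2]
    ext i j
    simp only [Matrix.sum_apply, vecMulVec_apply, mul_apply, Matrix.smul_apply, smul_eq_mul]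
    congr 1
    ext r
    rw [← mul_apply, hPD]
    ring
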